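/- Let T be a positive integer, let e0 ≥ 0, e1 ≥ 0 and β ≥ 0 be real numbers with e0 + e1 > 0, and let L : ℕ → ℝ be a workload. Suppose the online solution (x, m) satisfies m 0 = 0, m t ≥ 0 for all t, x t = m t for all t, and Σ_{j=1}^{t} m j ≤ Σ_{j=1}^{t} L j for every t ∈ {1,…,T}; and suppose the offline solution (x*, m*) satisfies x* t ≤ m* t for every t ∈ {1,…,T}, m* 0 = 0, and Σ_{t=1}^{T} x* t = Σ_{t=1}^{T} L t. Then cost(X,M) ≤ ((e0 + e1 + 2β)/(e0 + e1)) · cost(X*,M*), where cost(Y,N) = Σ_{t=1}^{T} (e0 · n t + e1 · y t) + β Σ_{t=1}^{T} |n t − n (t−1)|. -/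

import Mathlib

/-- The total switching cost of a nonnegative schedule starting at 0 is at most
twice its total size (minus the final level). -/
lemma vfw_switch_bound (m : ℕ → ℝ) (hm0 : m 0 = 0) (hm : ∀ t, 0 ≤ m t) (T : ℕ) :
    ∑ t ∈ Finset.Icc 1 T, |m t - m (t - 1)| ≤ 2 * ∑ t ∈ Finset.Icc 1 T, m t - m T := by
  induction T with
  | zero => simp [hm0]
  | succ n ih =>
    rw [Finset.sum_Icc_succ_top (by omega), Finset.sum_Icc_succ_top (by omega)]
    have h1 : |m (n + 1) - m (n + 1 - 1)| ≤ m (n + 1) + m n := by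
      simp only [Nat.add_sub_cancel]
      calc |m (n + 1) - m n| ≤ |m (n + 1)| + |m n| := abs_sub _ _
        _ = m (n + 1) + m n := by rw [abs_of_nonneg (hm _), abs_of_nonneg (hm _)]
    linarith [hm n, hm (n + 1)]

/-- Competitive-ratio bound (Theorem 2 of the paper):
`cost(X,M) ≤ ((e0 + e1 + 2β)/(e0 + e1)) · cost(X*,M*)`. -/
theorem vfw_competitive_ratio (T : ℕ) (hT : 0 < T)
    (e0 e1 β : ℝ) (he0 : 0 ≤ e0) (he1 : 0 ≤ e1) (hβ : 0 ≤ β)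
    (hpos : 0 < e0 + e1)
    (L : ℕ → ℝ) (hL : ∀ t, 0 ≤ L t)
    -- online solution (x, m)
    (x m : ℕ → ℝ) (hm0 : m 0 = 0) (hm : ∀ t, 0 ≤ m t)
    (hx : ∀ t, x t = m t)
    (hrel : ∀ t ∈ Finset.Icc 1 T,
      ∑ j ∈ Finset.Icc 1 t, m j ≤ ∑ j ∈ Finset.Icc 1 t, L j)
    -- offline solution (x*, m*)
    (xs ms : ℕ → ℝ) (hms0 : ms 0 = 0)
    (hxm : ∀ t ∈ Finset.Icc 1 T, xs t ≤ ms t)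
    (hsum : ∑ t ∈ Finset.Icc 1 T, xs t = ∑ t ∈ Finset.Icc 1 T, L t) :
    ∑ t ∈ Finset.Icc 1 T, (e0 * m t + e1 * x t)
      + β * ∑ t ∈ Finset.Icc 1 T, |m t - m (t - 1)|
      ≤ ((e0 + e1 + 2 * β) / (e0 + e1)) *
        (∑ t ∈ Finset.Icc 1 T, (e0 * ms t + e1 * xs t)
          + β * ∑ t ∈ Finset.Icc 1 T, |ms t - ms (t - 1)|) := by
  set S : ℝ := ∑ t ∈ Finset.Icc 1 T, m t with hSdef
  have hS0 : 0 ≤ S := Finset.sum_nonneg fun t _ => hm t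
  have hSL : S ≤ ∑ t ∈ Finset.Icc 1 T, L t :=
    hrel T (Finset.mem_Icc.mpr ⟨hT, le_refl T⟩)
  -- online operating cost = (e0+e1) * S
  have hop : ∑ t ∈ Finset.Icc 1 T, (e0 * m t + e1 * x t) = (e0 + e1) * S := by
    rw [Finset.mul_sum]
    exact Finset.sum_congr rfl fun t _ => by rw [hx]; ring
  -- online switching cost ≤ 2 S
  have hsw : ∑ t ∈ Finset.Icc 1 T, |m t - m (t - 1)| ≤ 2 * S := by
    have := vfw_switch_bound m hm0 hm T
    have := hm T
    linarith
  -- offline operating cost ≥ (e0+e1) * Σ L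
  have hoff : (e0 + e1) * ∑ t ∈ Finset.Icc 1 T, L t
      ≤ ∑ t ∈ Finset.Icc 1 T, (e0 * ms t + e1 * xs t) := by
    have h1 : ∑ t ∈ Finset.Icc 1 T, (e0 * ms t + e1 * xs t)
        = e0 * ∑ t ∈ Finset.Icc 1 T, ms t + e1 * ∑ t ∈ Finset.Icc 1 T, xs t := by
      rw [Finset.mul_sum, Finset.mul_sum, ← Finset.sum_add_distrib]
    have h2 : ∑ t ∈ Finset.Icc 1 T, xs t ≤ ∑ t ∈ Finset.Icc 1 T, ms t :=
      Finset.sum_le_sum hxm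
    rw [h1, hsum] at *
    nlinarith [hsum]
  have hswoff : 0 ≤ ∑ t ∈ Finset.Icc 1 T, |ms t - ms (t - 1)| :=
    Finset.sum_nonneg fun t _ => abs_nonneg _
  set C : ℝ := ∑ t ∈ Finset.Icc 1 T, (e0 * ms t + e1 * xs t)
      + β * ∑ t ∈ Finset.Icc 1 T, |ms t - ms (t - 1)| with hCdef
  have hC : (e0 + e1) * S ≤ C := by
    have : (e0 + e1) * S ≤ (e0 + e1) * ∑ t ∈ Finset.Icc 1 T, L t :=
      mul_le_mul_of_nonneg_left hSL (le_of_lt hpos)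
    have hb : 0 ≤ β * ∑ t ∈ Finset.Icc 1 T, |ms t - ms (t - 1)| :=
      mul_nonneg hβ hswoff
    rw [hCdef]; linarith
  -- Chain the bounds
  have step1 : ∑ t ∈ Finset.Icc 1 T, (e0 * m t + e1 * x t)
      + β * ∑ t ∈ Finset.Icc 1 T, |m t - m (t - 1)|
      ≤ (e0 + e1 + 2 * β) * S := by
    rw [hop]
    nlinarith [mul_le_mul_of_nonneg_left hsw hβ]
  have step2 : (e0 + e1 + 2 * β) * S ≤ ((e0 + e1 + 2 * β) / (e0 + e1)) * C := by
    rw [div_mul_eq_mul_div, mul_div_assoc]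
    apply mul_le_mul_of_nonneg_left _ (by linarith)
    rw [le_div_iff₀ hpos]
    linarith [hC]
  linarith
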